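/- arXiv:2101.12673 — 3 statements merged into one kernel-verified Lean document; each statement's English description precedes it below -/
import Mathlib

section
/- Let {x,y} be a two-pair in a graph G, and let J = G(x,y → z) be the contraction of x and y into z. Then the clique number of G equals the clique number of J. -/
open SimpleGraph

variable {V : Type*}

/-- A walk is chordless if every `G`-edge between vertices on the walk is an edge of the walk. -/
def SimpleGraph.Walk.Chordless {V : Type*} {G : SimpleGraph V} {x y : V} (p : G.Walk x y) : Prop :=
  ∀ u v, u ∈ p.support → v ∈ p.support → G.Adj u v → p.toSubgraph.Adj u v

/-- A two-pair: non-adjacent vertices such that every induced (chordless) path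
between them has exactly two edges. -/
def SimpleGraph.IsTwoPair (G : SimpleGraph V) (x y : V) : Prop :=
  x ≠ y ∧ ¬ G.Adj x y ∧ ∀ p : G.Walk x y, p.IsPath → p.Chordless → p.length = 2

/-- `G` has a hole: an induced (chordless) cycle of length at least 5. -/
def SimpleGraph.HasHole (G : SimpleGraph V) : Prop :=
  ∃ (x : V) (p : G.Walk x x), p.IsCycle ∧ 5 ≤ p.length ∧ p.Chordless

/-- Weakly chordal graphs: hole-free and antihole-free. -/
def SimpleGraph.WeaklyChordal (G : SimpleGraph V) : Prop :=
  ¬ G.HasHole ∧ ¬ (Gᶜ).HasHole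

/-- The contraction `G(x,y → z)` of a pair of vertices; the vertex `x` of the subtype
plays the role of the new vertex `z`, adjacent to exactly the vertices of `G - {x,y}`
adjacent to at least one of `x`, `y`. -/
def SimpleGraph.contractPair (G : SimpleGraph V) (x y : V) : SimpleGraph {v : V // v ≠ y} where
  Adj a b := a ≠ b ∧ (G.Adj a b ∨ (a.1 = x ∧ G.Adj y b.1) ∨ (b.1 = x ∧ G.Adj a.1 y))
  symm := by
    constructor
    rintro a b ⟨hab, h | ⟨h1, h2⟩ | ⟨h1, h2⟩⟩
    · exact ⟨hab.symm, Or.inl h.symm⟩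
    · exact ⟨hab.symm, Or.inr (Or.inr ⟨h1, h2.symm⟩)⟩
    · exact ⟨hab.symm, Or.inr (Or.inl ⟨h1, h2.symm⟩)⟩
  loopless := ⟨fun a => by rintro ⟨h, -⟩; exact h rfl⟩

/-- The square of a graph: join vertices at distance at most 2. -/
def SimpleGraph.square (G : SimpleGraph V) : SimpleGraph V where
  Adj a b := a ≠ b ∧ (G.Adj a b ∨ ∃ w, G.Adj a w ∧ G.Adj w b)
  symm := by
    constructor
    rintro a b ⟨hab, h | ⟨w, h1, h2⟩⟩
    · exact ⟨hab.symm, Or.inl h.symm⟩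
    · exact ⟨hab.symm, Or.inr ⟨w, h2.symm, h1.symm⟩⟩
  loopless := ⟨fun a => by rintro ⟨h, -⟩; exact h rfl⟩

/-- A graph is perfect if every induced subgraph has chromatic number equal to clique number. -/
def SimpleGraph.IsPerfect (G : SimpleGraph V) : Prop :=
  ∀ s : Set V, (G.induce s).chromaticNumber = ((G.induce s).cliqueNum : ℕ∞)

/-- contracting a two-pair preserves the clique number. -/
theorem cliqueNum_contractPair [Fintype V] [DecidableEq V] (G : SimpleGraph V) (x y : V)
    (h : G.IsTwoPair x y) :
    G.cliqueNum = (G.contractPair x y).cliqueNum := by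
  classical
  obtain ⟨hxy, hnadj, hind⟩ := h
  apply le_antisymm
  · -- G.cliqueNum ≤ J.cliqueNum
    obtain ⟨s, hs⟩ := G.exists_isNClique_cliqueNum
    set f : V → {v : V // v ≠ y} := fun v => if hv : v = y then ⟨x, hxy⟩ else ⟨v, hv⟩ with hf
    have hnotboth : ¬ (x ∈ s ∧ y ∈ s) := by
      rintro ⟨hxs, hys⟩
      exact hnadj (hs.1 (Finset.mem_coe.2 hxs) (Finset.mem_coe.2 hys) hxy)
    have hinj : Set.InjOn f s := by
      intro u hu v hv huv
      simp only [hf] at huv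
      split_ifs at huv with h1 h2 h2
      · exact h1.trans h2.symm
      · exfalso
        have : v = x := by simpa using congrArg Subtype.val huv.symm
        exact hnotboth ⟨this ▸ hv, h1 ▸ hu⟩
      · exfalso
        have : u = x := by simpa using congrArg Subtype.val huv
        exact hnotboth ⟨this ▸ hu, h2 ▸ hv⟩
      · simpa using congrArg Subtype.val huv
    have himage : (G.contractPair x y).IsClique (s.image f) := by
      intro a ha b hb hab
      simp only [Finset.coe_image, Set.mem_image, Finset.mem_coe] at ha hb
      obtain ⟨u, hu, rfl⟩ := ha
      obtain ⟨v, hv, rfl⟩ := hb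
      have huv : u ≠ v := fun e => hab (by rw [e])
      have hadj : G.Adj u v := hs.1 (Finset.mem_coe.2 hu) (Finset.mem_coe.2 hv) huv
      show _ ∧ _; refine ⟨hab, ?_⟩
      simp only [hf]
      split_ifs with h1 h2 h2
      · exact absurd (h1.trans h2.symm) huv
      · exact Or.inr (Or.inl ⟨rfl, h1 ▸ hadj⟩)
      · exact Or.inr (Or.inr ⟨rfl, h2 ▸ hadj⟩)
      · exact Or.inl hadj
    calc G.cliqueNum = s.card := hs.2.symm
      _ = (s.image f).card := (Finset.card_image_of_injOn hinj).symm
      _ ≤ _ := SimpleGraph.IsClique.card_le_cliqueNum (tc := himage)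
  · -- J.cliqueNum ≤ G.cliqueNum
    obtain ⟨s, hs⟩ := (G.contractPair x y).exists_isNClique_cliqueNum
    set z : {v : V // v ≠ y} := ⟨x, hxy⟩ with hz
    by_cases hzs : z ∈ s
    · -- z ∈ s
      have key : (∀ a ∈ s.erase z, G.Adj x a.1) ∨ (∀ a ∈ s.erase z, G.Adj y a.1) := by
        by_contra hk
        push_neg at hk
        obtain ⟨⟨a, ha, hax⟩, ⟨b, hb, hby⟩⟩ := hk
        obtain ⟨haz, has⟩ := Finset.mem_erase.1 ha
        obtain ⟨hbz, hbs⟩ := Finset.mem_erase.1 hb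
        have hax' : a.1 ≠ x := fun e => haz (Subtype.ext e)
        have hbx' : b.1 ≠ x := fun e => hbz (Subtype.ext e)
        -- z adjacent to a gives G.Adj y a
        have hza : (G.contractPair x y).Adj z a :=
          hs.1 (Finset.mem_coe.2 hzs) (Finset.mem_coe.2 has) (Ne.symm haz)
        have hya : G.Adj y a.1 := by
          rcases (show _ ∧ _ from hza).2 with h1 | ⟨_, h2⟩ | ⟨h3, _⟩
          · exact absurd h1 hax
          · exact h2
          · exact absurd h3 hax'
        -- z adjacent to b gives G.Adj x b
        have hzb : (G.contractPair x y).Adj z b :=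
          hs.1 (Finset.mem_coe.2 hzs) (Finset.mem_coe.2 hbs) (Ne.symm hbz)
        have hxb : G.Adj x b.1 := by
          rcases (show _ ∧ _ from hzb).2 with h1 | ⟨_, h2⟩ | ⟨h3, _⟩
          · exact h1
          · exact absurd h2 hby
          · exact absurd h3 hbx'
        have hab : a ≠ b := fun e => hax (e ▸ hxb)
        have hba : G.Adj b.1 a.1 := by
          have := hs.1 (Finset.mem_coe.2 has) (Finset.mem_coe.2 hbs) hab
          rcases (show _ ∧ _ from this).2 with h1 | ⟨h2, _⟩ | ⟨h3, _⟩
          · exact h1.symm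
          · exact absurd h2 hax'
          · exact absurd h3 hbx'
        have hay : G.Adj a.1 y := hya.symm
        -- build the induced path x - b - a - y of length 3
        set p : G.Walk x y :=
          Walk.cons hxb (Walk.cons hba (Walk.cons hay Walk.nil)) with hp
        have hxa : x ≠ a.1 := Ne.symm hax'
        have hxb' : x ≠ b.1 := hxb.ne
        have hba' : b.1 ≠ a.1 := hba.ne
        have hby' : b.1 ≠ y := b.2
        have hay' : a.1 ≠ y := a.2
        have hpath : p.IsPath := by
          simp [hp, Walk.isPath_def, hxb', hxa, hxy, hba', hby', hay']
        have hchord : p.Chordless := by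
          intro u v hu hv hadj
          have hu' : u = x ∨ u = b.1 ∨ u = a.1 ∨ u = y := by
            simpa [hp] using hu
          have hv' : v = x ∨ v = b.1 ∨ v = a.1 ∨ v = y := by
            simpa [hp] using hv
          rcases hu' with rfl | rfl | rfl | rfl <;>
            rcases hv' with rfl | rfl | rfl | rfl <;>
            first
              | exact absurd hadj (G.irrefl)
              | exact absurd hadj hax
              | exact absurd hadj (fun e => hax e.symm)
              | exact absurd hadj hby
              | exact absurd hadj (fun e => hby e.symm)
              | exact absurd hadj hnadj
              | exact absurd hadj (fun e => hnadj e.symm)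
              | simp [hp, Walk.toSubgraph]
        have := hind p hpath hchord
        simp [hp] at this
      -- now build a clique in G
      have hvalinj : Set.InjOn (Subtype.val : {v : V // v ≠ y} → V) ((s.erase z) : Set _) :=
        Subtype.val_injective.injOn
      have hximg : ∀ w ∈ (s.erase z).image Subtype.val, w ≠ x := by
        intro w hw
        simp only [Finset.mem_image] at hw
        obtain ⟨a, ha, rfl⟩ := hw
        exact fun e => (Finset.mem_erase.1 ha).1 (Subtype.ext e)
      have hyimg : ∀ w ∈ (s.erase z).image Subtype.val, w ≠ y := by
        intro w hw
        simp only [Finset.mem_image] at hw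
        obtain ⟨a, ha, rfl⟩ := hw
        exact a.2
      have hGadj : ∀ u ∈ (s.erase z).image Subtype.val, ∀ v ∈ (s.erase z).image Subtype.val,
          u ≠ v → G.Adj u v := by
        intro u hu v hv huv
        simp only [Finset.mem_image] at hu hv
        obtain ⟨a, ha, rfl⟩ := hu
        obtain ⟨b, hb, rfl⟩ := hv
        have hab : a ≠ b := fun e => huv (by rw [e])
        have := hs.1 (Finset.mem_coe.2 (Finset.mem_erase.1 ha).2)
          (Finset.mem_coe.2 (Finset.mem_erase.1 hb).2) hab
        rcases (show _ ∧ _ from this).2 with h1 | ⟨h2, _⟩ | ⟨h3, _⟩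
        · exact h1
        · exact absurd h2 (fun e => (Finset.mem_erase.1 ha).1 (Subtype.ext e))
        · exact absurd h3 (fun e => (Finset.mem_erase.1 hb).1 (Subtype.ext e))
      have hcard : ((s.erase z).image Subtype.val).card = s.card - 1 := by
        rw [Finset.card_image_of_injective _ Subtype.val_injective,
          Finset.card_erase_of_mem hzs]
      have hspos : 1 ≤ s.card := Finset.card_pos.2 ⟨z, hzs⟩
      rcases key with hkx | hky
      · -- insert x
        have hxnot : x ∉ (s.erase z).image Subtype.val := fun hmem => hximg x hmem rfl
        have hclq : G.IsClique (insert x ((s.erase z).image Subtype.val) : Finset V) := by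
          intro u hu v hv huv
          simp only [Finset.coe_insert, Set.mem_insert_iff, Finset.mem_coe] at hu hv
          rcases hu with rfl | hu <;> rcases hv with rfl | hv
          · exact absurd rfl huv
          · obtain ⟨a, ha, rfl⟩ := Finset.mem_image.1 hv
            exact hkx a ha
          · obtain ⟨a, ha, rfl⟩ := Finset.mem_image.1 hu
            exact (hkx a ha).symm
          · exact hGadj u hu v hv huv
        calc (G.contractPair x y).cliqueNum = s.card := hs.2.symm
          _ = (insert x ((s.erase z).image Subtype.val)).card := by
              rw [Finset.card_insert_of_notMem hxnot, hcard]
              omega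
          _ ≤ G.cliqueNum := SimpleGraph.IsClique.card_le_cliqueNum (tc := hclq)
      · -- insert y
        have hynot : y ∉ (s.erase z).image Subtype.val := fun hmem => hyimg y hmem rfl
        have hclq : G.IsClique (insert y ((s.erase z).image Subtype.val) : Finset V) := by
          intro u hu v hv huv
          simp only [Finset.coe_insert, Set.mem_insert_iff, Finset.mem_coe] at hu hv
          rcases hu with rfl | hu <;> rcases hv with rfl | hv
          · exact absurd rfl huv
          · obtain ⟨a, ha, rfl⟩ := Finset.mem_image.1 hv
            exact hky a ha
          · obtain ⟨a, ha, rfl⟩ := Finset.mem_image.1 hu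
            exact (hky a ha).symm
          · exact hGadj u hu v hv huv
        calc (G.contractPair x y).cliqueNum = s.card := hs.2.symm
          _ = (insert y ((s.erase z).image Subtype.val)).card := by
              rw [Finset.card_insert_of_notMem hynot, hcard]
              omega
          _ ≤ G.cliqueNum := SimpleGraph.IsClique.card_le_cliqueNum (tc := hclq)
    · -- z ∉ s : project via Subtype.val
      have hclq : G.IsClique (s.image Subtype.val : Finset V) := by
        intro u hu v hv huv
        simp only [Finset.coe_image, Set.mem_image, Finset.mem_coe] at hu hv
        obtain ⟨a, ha, rfl⟩ := hu
        obtain ⟨b, hb, rfl⟩ := hv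
        have hab : a ≠ b := fun e => huv (by rw [e])
        have := hs.1 (Finset.mem_coe.2 ha) (Finset.mem_coe.2 hb) hab
        rcases (show _ ∧ _ from this).2 with h1 | ⟨h2, _⟩ | ⟨h3, _⟩
        · exact h1
        · exact absurd h2 (fun e => hzs ((Subtype.ext e : a = z) ▸ ha))
        · exact absurd h3 (fun e => hzs ((Subtype.ext e : b = z) ▸ hb))
      calc (G.contractPair x y).cliqueNum = s.card := hs.2.symm
        _ = (s.image Subtype.val).card :=
            (Finset.card_image_of_injective _ Subtype.val_injective).symm
        _ ≤ G.cliqueNum := SimpleGraph.IsClique.card_le_cliqueNum (tc := hclq)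
end

section
/- If {x,y} is a two-pair in G, J = G(x,y → z) is the contraction, and f is a proper coloring of J, then the coloring of G defined by giving both x and y the color f(z) and every other vertex its color in f is a proper coloring of G. -/
open SimpleGraph

variable {V : Type*}

/-- lifting a proper coloring of the contraction to a proper coloring of `G`,
giving both `x` and `y` the color of `z` and every other vertex its color. -/
theorem properColoring_of_contractPair (G : SimpleGraph V) (x y : V)
    (h : G.IsTwoPair x y) {α : Type*} (f : {v : V // v ≠ y} → α)
    (hf : ∀ a b, (G.contractPair x y).Adj a b → f a ≠ f b)
    (g : V → α)
    (hg : ∀ (v : V) (hv : v ≠ y), g v = f ⟨v, hv⟩)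
    (hgy : g y = f ⟨x, h.1⟩) :
    ∀ a b, G.Adj a b → g a ≠ g b := by
  have hnadj := h.2.1
  intro a b hab
  by_cases ha : a = y
  · have hab' : G.Adj y b := ha ▸ hab
    have hb : b ≠ y := fun hb => G.loopless.irrefl _ (hb ▸ hab')
    have hbx : b ≠ x := fun hb => hnadj (hb ▸ hab').symm
    rw [ha, hgy, hg b hb]
    exact hf _ _ ⟨by simp [Subtype.ext_iff, Ne.symm hbx], Or.inr (Or.inl ⟨rfl, hab'⟩)⟩
  · by_cases hb : b = y
    · have hab' : G.Adj a y := hb ▸ hab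
      have hax : a ≠ x := fun h' => hnadj (h' ▸ hab')
      rw [hb, hgy, hg a ha]
      exact hf _ _ ⟨by simp [Subtype.ext_iff, hax], Or.inr (Or.inr ⟨rfl, hab'⟩)⟩
    · rw [hg a ha, hg b hb]
      exact hf _ _ ⟨by simp [Subtype.ext_iff, hab.ne], Or.inl hab⟩
end

section
/- If {x,y} is a two-pair in G and K is a clique in the contraction J = G(x,y → z) containing z, then either (K − {z}) ∪ {x} or (K − {z}) ∪ {y} is a clique in G. -/
open SimpleGraph

variable {V : Type*}

/-- a clique of the contraction containing `z` lifts to a clique of `G`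
by replacing `z` with `x` or with `y`. -/
theorem clique_of_contractPair [DecidableEq V] (G : SimpleGraph V) (x y : V)
    (h : G.IsTwoPair x y) (K : Finset {v : V // v ≠ y})
    (hK : (G.contractPair x y).IsClique (K : Set {v : V // v ≠ y}))
    (hz : (⟨x, h.1⟩ : {v : V // v ≠ y}) ∈ K) :
    G.IsClique ((K.image Subtype.val : Finset V) : Set V) ∨
    G.IsClique ((insert y ((K.image Subtype.val).erase x) : Finset V) : Set V) := by
  classical
  set z : {v : V // v ≠ y} := ⟨x, h.1⟩ with hzdef
  obtain ⟨hxy, hnadj, htp⟩ := h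
  have hne_z : ∀ a : {v : V // v ≠ y}, a ≠ z → a.1 ≠ x := by
    intro a haz hax
    exact haz (Subtype.ext hax)
  have hothers : ∀ a ∈ K, a ≠ z → ∀ b ∈ K, b ≠ z → a ≠ b → G.Adj a.1 b.1 := by
    intro a ha haz b hb hbz hab
    obtain ⟨-, hadj | ⟨h1, -⟩ | ⟨h1, -⟩⟩ := hK ha hb hab
    · exact hadj
    · exact absurd h1 (hne_z a haz)
    · exact absurd h1 (hne_z b hbz)
  have hadjz : ∀ a ∈ K, a ≠ z → G.Adj x a.1 ∨ G.Adj y a.1 := by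
    intro a ha haz
    obtain ⟨-, hadj | ⟨-, h2⟩ | ⟨h1, -⟩⟩ := hK hz ha (Ne.symm haz)
    · exact Or.inl hadj
    · exact Or.inr h2
    · exact absurd h1 (hne_z a haz)
  by_cases hall : ∀ a ∈ K, a ≠ z → G.Adj x a.1
  · left
    intro u hu v hv huv
    simp only [Finset.coe_image, Set.mem_image, Finset.mem_coe] at hu hv
    obtain ⟨a, ha, rfl⟩ := hu
    obtain ⟨b, hb, rfl⟩ := hv
    have hab : a ≠ b := fun e => huv (by rw [e])
    by_cases haz : a = z
    · subst haz
      have hbz : b ≠ z := fun e => hab e.symm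
      exact hall b hb hbz
    · by_cases hbz : b = z
      · subst hbz
        exact (hall a ha haz).symm
      · exact hothers a ha haz b hb hbz hab
  · push_neg at hall
    obtain ⟨u, hu, huz, hxu⟩ := hall
    have hyu : G.Adj y u.1 := (hadjz u hu huz).resolve_left hxu
    have hally : ∀ a ∈ K, a ≠ z → G.Adj y a.1 := by
      intro a ha haz
      by_contra hya
      have hxa : G.Adj x a.1 := (hadjz a ha haz).resolve_right hya
      have hau : a ≠ u := by
        intro e; subst e; exact hya hyu
      have hadj_au : G.Adj a.1 u.1 := hothers a ha haz u hu huz hau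
      -- build the induced path x - a - u - y of length 3
      have hxu' : x ≠ u.1 := fun e => huz (Subtype.ext e.symm)
      have hxa' : x ≠ a.1 := hxa.ne
      have hpath : (Walk.cons hxa (Walk.cons hadj_au
          (Walk.cons (hyu.symm) Walk.nil))).IsPath := by
        simp [Walk.isPath_def, hxa', hxu', hxy, hadj_au.ne, a.2, u.2]
      have hchord : (Walk.cons hxa (Walk.cons hadj_au
          (Walk.cons (hyu.symm) Walk.nil))).Chordless := by
        intro p q hp hq hpq
        simp only [Walk.support_cons, Walk.support_nil, List.mem_cons,
          List.mem_singleton, List.not_mem_nil, or_false] at hp hq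
        simp only [Walk.toSubgraph, Subgraph.sup_adj, subgraphOfAdj_adj,
          singletonSubgraph_adj, Pi.bot_apply]
        have hnyx : ¬ G.Adj y x := fun e => hnadj e.symm
        have hnay : ¬ G.Adj a.1 y := fun e => hya e.symm
        have hnya : ¬ G.Adj y a.1 := hya
        have hnux : ¬ G.Adj u.1 x := fun e => hxu e.symm
        rcases hp with rfl | rfl | rfl | rfl <;>
          rcases hq with rfl | rfl | rfl | rfl <;>
          first
            | exact (hpq.ne rfl).elim
            | exact absurd hpq hnadj
            | exact absurd hpq hxu
            | exact absurd hpq hnyx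
            | exact absurd hpq hnay
            | exact absurd hpq hnya
            | exact absurd hpq hnux
            | simp [Sym2.eq_swap]
      have := htp _ hpath hchord
      simp at this
    right
    intro p hp q hq hpq
    simp only [Finset.coe_insert, Set.mem_insert_iff, Finset.coe_erase,
      Set.mem_diff, Set.mem_singleton_iff, Finset.coe_image, Set.mem_image,
      Finset.mem_coe] at hp hq
    have key : ∀ w, (∃ a ∈ K, a.1 = w) ∧ w ≠ x → ∃ a ∈ K, a ≠ z ∧ a.1 = w := by
      rintro w ⟨⟨a, ha, rfl⟩, hwx⟩
      exact ⟨a, ha, fun e => hwx (by rw [e]), rfl⟩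
    rcases hp with rfl | hp
    · rcases hq with rfl | hq
      · exact absurd rfl hpq
      · obtain ⟨b, hb, hbz, rfl⟩ := key _ hq
        exact hally b hb hbz
    · rcases hq with rfl | hq
      · obtain ⟨a, ha, haz, rfl⟩ := key _ hp
        exact (hally a ha haz).symm
      · obtain ⟨a, ha, haz, rfl⟩ := key _ hp
        obtain ⟨b, hb, hbz, rfl⟩ := key _ hq
        exact hothers a ha haz b hb hbz (fun e => hpq (by rw [e]))
end
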